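/- The homogeneous weight w_hom on a finite Frobenius ring R does not depend on the choice of generating character: if χ and χ' are both characters of (R,+) whose kernels contain no nonzero left ideal, then 1 − (1/|R^×|) Σ_{u∈R^×} χ(ux) = 1 − (1/|R^×|) Σ_{u∈R^×} χ'(ux) for all x ∈ R. -/
import Mathlib

open scoped Classical

/-- A generating character: a character of `(R,+)` whose kernel contains no
nonzero left ideal. -/
def IsGenChar {R : Type} [Ring R] [Fintype R] (χ : AddChar R ℂ) : Prop :=
  ∀ I : Ideal R, I ≠ ⊥ → ∃ x ∈ I, χ x ≠ 1

namespace WhomAux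

variable {R : Type} [Ring R] [Fintype R]

/-- The left ideal `I·x = {r*x : r ∈ I}`. -/
def mulIdeal (I : Ideal R) (x : R) : Ideal R where
  carrier := {y | ∃ r ∈ I, r * x = y}
  add_mem' := by
    rintro a b ⟨r, hr, rfl⟩ ⟨s, hs, rfl⟩
    exact ⟨r + s, I.add_mem hr hs, by rw [add_mul]⟩
  zero_mem' := ⟨0, I.zero_mem, zero_mul x⟩
  smul_mem' := by
    rintro a y ⟨r, hr, rfl⟩
    exact ⟨a * r, I.smul_mem a hr, by rw [smul_eq_mul, mul_assoc]⟩

/-- The restriction of `r ↦ χ (r * x)` to a left ideal `I`, as an additive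
character of `I`. -/
def restChar (χ : AddChar R ℂ) (x : R) (I : Ideal R) : AddChar I ℂ where
  toFun r := χ ((r : R) * x)
  map_zero_eq_one' := by simp
  map_add_eq_mul' a b := by
    simp only [Submodule.coe_add, add_mul]
    exact χ.map_add_eq_mul _ _

/-- The sum of a generating character over the multiples `r*x`, `r ∈ I`,
does not depend on the character. -/
theorem sum_ideal_eq (χ : AddChar R ℂ) (hχ : IsGenChar χ) (x : R) (I : Ideal R) :
    ∑ r : I, χ ((r : R) * x) =
      if ∀ r ∈ I, r * x = 0 then (Fintype.card I : ℂ) else 0 := by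
  split_ifs with h
  · rw [Finset.sum_congr rfl fun r _ => by rw [h r r.2, χ.map_zero_eq_one]]
    simp
  · push_neg at h
    obtain ⟨r₀, hr₀, hr₀x⟩ := h
    have hJ : mulIdeal I x ≠ ⊥ := by
      intro hbot
      apply hr₀x
      have : r₀ * x ∈ mulIdeal I x := ⟨r₀, hr₀, rfl⟩
      rw [hbot] at this
      simpa using this
    obtain ⟨y, hy, hχy⟩ := hχ _ hJ
    obtain ⟨r, hr, rfl⟩ := hy
    have hne : restChar χ x I ≠ 0 :=
      AddChar.ne_zero_iff.2 ⟨⟨r, hr⟩, hχy⟩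
    have := AddChar.sum_eq_zero_iff_ne_zero.2 hne
    simpa [restChar, AddChar.coe_mk] using this

end WhomAux

/-- The homogeneous weight on a finite Frobenius ring does not depend on the
choice of generating character. -/
theorem whom_indep_of_genChar {R : Type} [Ring R] [Fintype R]
    (χ χ' : AddChar R ℂ) (hχ : IsGenChar χ) (hχ' : IsGenChar χ') (x : R) :
    1 - (Fintype.card Rˣ : ℂ)⁻¹ * ∑ u : Rˣ, χ ((u : R) * x) =
    1 - (Fintype.card Rˣ : ℂ)⁻¹ * ∑ u : Rˣ, χ' ((u : R) * x) := by
  haveI : Finite (Ideal R) :=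
    Finite.of_injective (fun I : Ideal R => (I : Set R)) SetLike.coe_injective
  haveI : Fintype (Ideal R) := Fintype.ofFinite _
  set f : R → ℂ := fun r => χ (r * x) - χ' (r * x) with hf
  -- the sum of `f` over any left ideal vanishes
  have hIdeal : ∀ I : Ideal R, ∑ r ∈ Finset.univ.filter (· ∈ I), f r = 0 := by
    intro I
    have hsub : ∀ ψ : AddChar R ℂ,
        ∑ r ∈ Finset.univ.filter (· ∈ I), ψ (r * x) = ∑ r : I, ψ ((r : R) * x) := by
      intro ψ
      exact Finset.sum_subtype _ (by simp) _
    rw [hf]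
    rw [Finset.sum_sub_distrib, hsub χ, hsub χ',
      WhomAux.sum_ideal_eq χ hχ x I, WhomAux.sum_ideal_eq χ' hχ' x I, sub_self]
  -- by induction over the (finite) poset of left ideals, the sum of `f` over
  -- the set of generators of any fixed left ideal vanishes
  have hGen : ∀ I : Ideal R,
      ∑ r ∈ Finset.univ.filter (fun r => Ideal.span {r} = I), f r = 0 := by
    intro I
    induction I using WellFoundedLT.induction with
    | ind I IH =>
      have hmaps : ∀ r ∈ Finset.univ.filter (· ∈ I),
          Ideal.span {r} ∈ Finset.univ.filter (· ≤ I) := by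
        intro r hr
        simp only [Finset.mem_filter, Finset.mem_univ, true_and] at hr ⊢
        rw [Ideal.span_le, Set.singleton_subset_iff]
        exact hr
      have hfib := Finset.sum_fiberwise_of_maps_to hmaps f
      have hinner : ∀ J ∈ Finset.univ.filter (· ≤ I),
          ∑ r ∈ (Finset.univ.filter (· ∈ I)).filter (fun r => Ideal.span {r} = J), f r =
          ∑ r ∈ Finset.univ.filter (fun r => Ideal.span {r} = J), f r := by
        intro J hJ
        simp only [Finset.mem_filter, Finset.mem_univ, true_and] at hJ
        congr 1
        ext r
        simp only [Finset.mem_filter, Finset.mem_univ, true_and, and_iff_right_iff_imp]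
        intro hr
        exact hJ (hr ▸ Ideal.subset_span rfl)
      rw [Finset.sum_congr rfl hinner, hIdeal I] at hfib
      have hsplit : Finset.univ.filter (· ≤ I) =
          insert I (Finset.univ.filter (· < I)) := by
        ext J
        simp only [Finset.mem_filter, Finset.mem_univ, true_and, Finset.mem_insert]
        constructor
        · intro h
          rcases eq_or_lt_of_le h with h | h
          · exact Or.inl h
          · exact Or.inr h
        · rintro (rfl | h)
          · exact le_rfl
          · exact le_of_lt h
      rw [hsplit, Finset.sum_insert (by simp)] at hfib
      rw [Finset.sum_congr rfl (fun J hJ => IH J (by simpa using hJ))] at hfib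
      simpa using hfib
  -- generators of the unit ideal are exactly the units
  have hunit : ∀ r : R, Ideal.span ({r} : Set R) = ⊤ ↔ IsUnit r := by
    intro r
    constructor
    · intro h
      have h1 : (1 : R) ∈ Ideal.span ({r} : Set R) := by rw [h]; trivial
      obtain ⟨b, hb⟩ := Ideal.mem_span_singleton'.1 h1
      have hsurj : Function.Surjective (fun y : R => y * r) := fun y =>
        ⟨y * b, by show y * b * r = y; rw [mul_assoc, hb, mul_one]⟩
      have hinj : Function.Injective (fun y : R => y * r) :=
        Finite.injective_iff_surjective.2 hsurj
      have hrb : r * b = 1 := by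
        apply hinj
        show (r * b) * r = 1 * r
        rw [mul_assoc, hb, mul_one, one_mul]
      exact ⟨⟨r, b, hrb, hb⟩, rfl⟩
    · intro h
      exact Ideal.eq_top_of_isUnit_mem _ (Ideal.subset_span rfl) h
  -- sum over units
  have hu : ∑ u : Rˣ, f (u : R) = 0 := by
    rw [← hGen ⊤]
    rw [show Finset.univ.filter (fun r : R => Ideal.span {r} = ⊤) =
        Finset.univ.filter IsUnit by ext r; simp [hunit r]]
    refine Finset.sum_bij (fun (u : Rˣ) _ => (u : R)) ?_ ?_ ?_ ?_
    · intro u _; simp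
    · intro u _ v _ h; exact Units.ext h
    · intro r hr
      simp only [Finset.mem_filter, Finset.mem_univ, true_and] at hr
      exact ⟨hr.unit, Finset.mem_univ _, rfl⟩
    · intro u _; rfl
  have hsum : ∑ u : Rˣ, χ ((u : R) * x) = ∑ u : Rˣ, χ' ((u : R) * x) := by
    have := hu
    rw [hf] at this
    simp only [Finset.sum_sub_distrib] at this
    exact sub_eq_zero.1 this
  rw [hsum]
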